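/- arXiv:1107.1063 — 4 statements merged into one kernel-verified Lean document; each statement's English description precedes it below -/
import Mathlib

section
/- For all integers m and r with 0 ≤ r and 2r + 2 ≤ m, one has S(m,r) = T(m−1−r, r). -/
open Finset

/-- `S n r = ∑_{i=r+1}^{⌊n/2⌋} C(n,2i)·C(i−1,r)`. -/
def S (n r : ℕ) : ℕ := ∑ i ∈ Icc (r + 1) (n / 2), n.choose (2 * i) * (i - 1).choose r

/-- `T n r = ∑_{j=r+1}^{n} C(n,j)·C(j−1,r)`. -/
def T (n r : ℕ) : ℕ := ∑ j ∈ Icc (r + 1) n, n.choose j * (j - 1).choose r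

def F (N r : ℕ) : ℕ := ∑ k ∈ range N, (k + r).choose r * 2 ^ k

lemma F_succ (N r : ℕ) : F (N+1) r = F N r + (N + r).choose r * 2 ^ N := by
  simp [F, Finset.sum_range_succ]

lemma sum_Icc_shift (f : ℕ → ℕ) (a b : ℕ) :
    ∑ i ∈ Icc (a+1) (b+1), f i = ∑ i ∈ Icc a b, f (i+1) := by
  rw [← Finset.map_add_right_Icc a b 1, Finset.sum_map]
  rfl

def S' (m r : ℕ) : ℕ := ∑ i ∈ Icc (r+1) m, m.choose (2*i) * (i-1).choose r
def B (m r : ℕ) : ℕ := ∑ i ∈ Icc r m, m.choose (2*i+1) * i.choose r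
def G (m r : ℕ) : ℕ := if 2*r+1 ≤ m then (m-r-1).choose r * 2^(m-2*r-1) else 0

-- extend the top of an S'-type sum by one: extra term has choose = 0
lemma S'_top (m r : ℕ) :
    ∑ i ∈ Icc (r+1) (m+1), m.choose (2*i) * (i-1).choose r = S' m r := by
  by_cases h : r ≤ m
  · rw [Finset.sum_Icc_succ_top (by omega)]
    have : m.choose (2*(m+1)) = 0 := Nat.choose_eq_zero_of_lt (by omega)
    simp [S', this]
  · have h1 : Icc (r+1) (m+1) = ∅ := by
      apply Finset.Icc_eq_empty; omega
    have h2 : Icc (r+1) m = ∅ := by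
      apply Finset.Icc_eq_empty; omega
    simp [S', h1, h2]

lemma S'_succ (m r : ℕ) : S' (m+1) r = S' m r + B m r := by
  by_cases h : r ≤ m
  · have : S' (m+1) r = ∑ i ∈ Icc r m, (m+1).choose (2*(i+1)) * i.choose r := by
      rw [S', sum_Icc_shift (fun i => (m+1).choose (2*i) * (i-1).choose r) r m]
      simp
    rw [this]
    have step : ∀ i, (m+1).choose (2*(i+1)) * i.choose r
        = m.choose (2*i+1) * i.choose r + m.choose (2*(i+1)) * i.choose r := by
      intro i
      have : 2*(i+1) = (2*i+1) + 1 := by ring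
      rw [this, Nat.choose_succ_succ]
      ring
    rw [Finset.sum_congr rfl (fun i _ => step i), Finset.sum_add_distrib]
    have : ∑ i ∈ Icc r m, m.choose (2*(i+1)) * i.choose r
        = ∑ i ∈ Icc (r+1) (m+1), m.choose (2*i) * (i-1).choose r := by
      rw [sum_Icc_shift (fun i => m.choose (2*i) * (i-1).choose r) r m]
      simp
    rw [this, S'_top]
    rw [Nat.add_comm]
    rfl
  · have h1 : Icc (r+1) (m+1) = ∅ := Finset.Icc_eq_empty (by omega)
    have h2 : Icc (r+1) m = ∅ := Finset.Icc_eq_empty (by omega)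
    have h3 : Icc r m = ∅ := Finset.Icc_eq_empty (by omega)
    simp [S', B, h1, h2, h3]

-- extend the top of a B-type sum
lemma B_top (m r : ℕ) :
    ∑ i ∈ Icc r (m+1), m.choose (2*i+1) * i.choose r = B m r := by
  by_cases h : r ≤ m + 1
  · rw [Finset.sum_Icc_succ_top h]
    have : m.choose (2*(m+1)+1) = 0 := Nat.choose_eq_zero_of_lt (by omega)
    simp [B, this]
  · have h1 : Icc r (m+1) = ∅ := Finset.Icc_eq_empty (by omega)
    have h2 : Icc r m = ∅ := Finset.Icc_eq_empty (by omega)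
    simp [B, h1, h2]

lemma S'_drop_bot (m s : ℕ) :
    ∑ i ∈ Icc (s+1) (m+1), m.choose (2*i) * (i-1).choose (s+1) = S' m (s+1) := by
  rw [S']
  apply (Finset.sum_subset ?_ ?_).symm
  · intro x hx; simp only [mem_Icc] at *; omega
  · intro x hx hnx
    simp only [mem_Icc] at hx hnx
    by_cases hxs : x = s + 1
    · subst hxs
      have : (s+1-1).choose (s+1) = 0 := Nat.choose_eq_zero_of_lt (by omega)
      simp [this]
    · have : m.choose (2*x) = 0 := Nat.choose_eq_zero_of_lt (by omega)
      simp [this]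

lemma B_succ_pos (m s : ℕ) : B (m+1) (s+1) = B m (s+1) + (S' m s + S' m (s+1)) := by
  have step : ∀ i, (m+1).choose (2*i+1) * i.choose (s+1)
      = m.choose (2*i) * i.choose (s+1) + m.choose (2*i+1) * i.choose (s+1) := by
    intro i
    rw [show 2*i+1 = (2*i)+1 from rfl, Nat.choose_succ_succ]
    ring
  rw [B, Finset.sum_congr rfl (fun i _ => step i), Finset.sum_add_distrib, B_top]
  have key : ∑ i ∈ Icc (s+1) (m+1), m.choose (2*i) * i.choose (s+1)
      = S' m s + S' m (s+1) := by
    rw [sum_Icc_shift (fun i => m.choose (2*i) * i.choose (s+1)) s m]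
    have step2 : ∀ i, m.choose (2*(i+1)) * (i+1).choose (s+1)
        = m.choose (2*(i+1)) * i.choose s + m.choose (2*(i+1)) * i.choose (s+1) := by
      intro i
      rw [Nat.choose_succ_succ]
      ring
    rw [Finset.sum_congr rfl (fun i _ => step2 i), Finset.sum_add_distrib]
    congr 1
    · have e1 : ∑ i ∈ Icc (s+1) (m+1), m.choose (2*i) * (i-1).choose s
          = ∑ x ∈ Icc s m, m.choose (2*(x+1)) * x.choose s := by
        rw [sum_Icc_shift (fun i => m.choose (2*i) * (i-1).choose s) s m]; simp
      rw [← e1, S'_top]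
    · have e2 : ∑ i ∈ Icc (s+1) (m+1), m.choose (2*i) * (i-1).choose (s+1)
          = ∑ x ∈ Icc s m, m.choose (2*(x+1)) * x.choose (s+1) := by
        rw [sum_Icc_shift (fun i => m.choose (2*i) * (i-1).choose (s+1)) s m]; simp
      rw [← e2, S'_drop_bot]
  rw [key]
  ring

lemma B_succ_zero (m : ℕ) : B (m+1) 0 = B m 0 + (1 + S' m 0) := by
  have step : ∀ i, (m+1).choose (2*i+1) * i.choose 0
      = m.choose (2*i) * i.choose 0 + m.choose (2*i+1) * i.choose 0 := by
    intro i
    rw [show 2*i+1 = (2*i)+1 from rfl, Nat.choose_succ_succ]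
    ring
  rw [B, Finset.sum_congr rfl (fun i _ => step i), Finset.sum_add_distrib, B_top]
  have key : ∑ i ∈ Icc 0 (m+1), m.choose (2*i) * i.choose 0 = 1 + S' m 0 := by
    have hins : Icc 0 (m+1) = insert 0 (Icc 1 (m+1)) := by
      ext x; simp only [mem_Icc, Finset.mem_insert]; omega
    rw [hins, Finset.sum_insert (by simp)]
    have := S'_top m 0
    simp only [Nat.choose_zero_right, Nat.mul_one] at this ⊢
    rw [this]
    simp
  rw [key]
  ring

lemma F_zero_add_one (N : ℕ) : F N 0 + 1 = 2 ^ N := by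
  induction N with
  | zero => simp [F]
  | succ N ih =>
    rw [F_succ]
    simp only [Nat.choose_zero_right, Nat.one_mul, pow_succ]
    omega

lemma H (t s : ℕ) : (t+s+1).choose (s+1) * 2^t + F t (s+1) + F (t+2) s
    = (t+s+2).choose (s+1) * 2^(t+1) := by
  induction t with
  | zero =>
    have hc : (1+s).choose s = s+1 := by
      rw [Nat.add_comm]; exact Nat.choose_succ_self_right s
    have h1 : F 2 s = 1 + (s+1) * 2 := by
      simp [F, Finset.sum_range_succ, hc]
    have h2 : (s+1).choose (s+1) = 1 := Nat.choose_self _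
    have h3 : (s+2).choose (s+1) = s+2 := by
      rw [show s+2 = (s+1)+1 from rfl, Nat.choose_succ_self_right]
    simp only [Nat.zero_add, F, Finset.range_zero, Finset.sum_empty] at *
    rw [h1]
    norm_num [h2, h3]
    ring
  | succ t ih =>
    have p1 : (t+1+s+2).choose (s+1) = (t+s+2).choose s + (t+s+2).choose (s+1) := by
      rw [show t+1+s+2 = (t+s+2)+1 from by ring, Nat.choose_succ_succ']
    rw [F_succ, F_succ (t+2) s, p1]
    have e1 : t+1+s+1 = t+s+2 := by ring
    have e2 : t+2+s = t+s+2 := by ring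
    have e3 : t + (s+1) = t+s+1 := by ring
    rw [e1, e2, e3, pow_succ, pow_succ, pow_succ]
    rw [pow_succ] at ih
    linarith [ih]

lemma G_succ_pos (m s : ℕ) :
    G (m+1) (s+1) = G m (s+1) + (F (m - 2*s - 1) s + F (m - 2*(s+1) - 1) (s+1)) := by
  rcases Nat.lt_or_ge m (2*s+2) with h | h
  · -- m ≤ 2s+1 : everything is zero
    have g1 : G (m+1) (s+1) = 0 := by rw [G, if_neg (by omega)]
    have g2 : G m (s+1) = 0 := by rw [G, if_neg (by omega)]
    have e1 : m - 2*s - 1 = 0 := by omega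
    have e2 : m - 2*(s+1) - 1 = 0 := by omega
    rw [g1, g2, e1, e2]
    simp [F]
  rcases Nat.eq_or_lt_of_le h with h2 | h2
  · -- m = 2s+2
    have g1 : G (m+1) (s+1) = 1 := by
      rw [G, if_pos (by omega)]
      have e1 : m + 1 - (s+1) - 1 = s+1 := by omega
      have e2 : m + 1 - 2*(s+1) - 1 = 0 := by omega
      rw [e1, e2, Nat.choose_self]
      simp
    have g2 : G m (s+1) = 0 := by rw [G, if_neg (by omega)]
    have e1 : m - 2*s - 1 = 1 := by omega
    have e2 : m - 2*(s+1) - 1 = 0 := by omega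
    rw [g1, g2, e1, e2]
    simp [F]
  · -- m ≥ 2s+3
    obtain ⟨t, rfl⟩ : ∃ t, m = 2*s+3+t := ⟨m - (2*s+3), by omega⟩
    have g1 : G (2*s+3+t+1) (s+1) = (t+s+2).choose (s+1) * 2^(t+1) := by
      rw [G, if_pos (by omega)]
      congr 2 <;> omega
    have g2 : G (2*s+3+t) (s+1) = (t+s+1).choose (s+1) * 2^t := by
      rw [G, if_pos (by omega)]
      congr 2 <;> omega
    have e1 : 2*s+3+t - 2*s - 1 = t+2 := by omega
    have e2 : 2*s+3+t - 2*(s+1) - 1 = t := by omega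
    rw [g1, g2, e1, e2]
    linarith [H t s]

lemma G_succ_zero (m : ℕ) : G (m+1) 0 = G m 0 + (1 + F (m - 2*0 - 1) 0) := by
  cases m with
  | zero => simp [G, F]
  | succ k =>
    have g1 : G (k+2) 0 = 2^(k+1) := by
      rw [G, if_pos (by omega)]
      have e1 : k+2-0-1 = k+1 := by omega
      have e2 : k+2-2*0-1 = k+1 := by omega
      rw [e1]; simp
    have g2 : G (k+1) 0 = 2^k := by
      rw [G, if_pos (by omega)]
      have e1 : k+1-0-1 = k := by omega
      have e2 : k+1-2*0-1 = k := by omega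
      rw [e1]; simp
    have e3 : k+1-2*0-1 = k := by omega
    rw [g1, g2, e3, pow_succ]
    linarith [F_zero_add_one k]

lemma main (m : ℕ) :
    (∀ r, S' m r = F (m - 2*r - 1) r) ∧ (∀ r, B m r = G m r) := by
  induction m with
  | zero =>
    constructor
    · intro r
      have h1 : Icc (r+1) 0 = ∅ := Finset.Icc_eq_empty (by omega)
      simp [S', h1, F, Nat.zero_sub]
    · intro r
      have h1 : B 0 r = 0 := by
        rw [B]
        apply Finset.sum_eq_zero
        intro i _
        have : Nat.choose 0 (2*i+1) = 0 := Nat.choose_eq_zero_of_lt (by omega)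
        simp [this]
      rw [h1, G, if_neg (by omega)]
  | succ m ih =>
    obtain ⟨ihS, ihB⟩ := ih
    constructor
    · intro r
      rw [S'_succ, ihS r, ihB r]
      rcases Nat.lt_or_ge m (2*r+1) with h | h
      · have e1 : m + 1 - 2*r - 1 = m - 2*r - 1 := by omega
        have g : G m r = 0 := by rw [G, if_neg (by omega)]
        rw [e1, g]
        simp
      · have e1 : m + 1 - 2*r - 1 = (m - 2*r - 1) + 1 := by omega
        rw [e1, F_succ]
        have g : G m r = (m - 2*r - 1 + r).choose r * 2^(m - 2*r - 1) := by
          rw [G, if_pos (by omega)]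
          congr 2 <;> omega
        rw [g]
    · intro r
      cases r with
      | zero =>
        rw [B_succ_zero, ihB 0, ihS 0, G_succ_zero]
      | succ s =>
        rw [B_succ_pos, ihB (s+1), ihS s, ihS (s+1), G_succ_pos]

lemma choose_sum_eq (n r : ℕ) (h : r ≤ n) :
    ∑ k ∈ Icc r n, n.choose k * k.choose r = n.choose r * 2^(n-r) := by
  obtain ⟨d, rfl⟩ : ∃ d, n = d + r := ⟨n - r, by omega⟩
  have step : ∀ k ∈ Icc r (d+r), (d+r).choose k * k.choose r
      = (d+r).choose r * d.choose (k-r) := by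
    intro k hk
    simp only [mem_Icc] at hk
    rw [Nat.choose_mul hk.1]
    congr 2
    omega
  have shift : ∑ k ∈ Icc r (d+r), d.choose (k-r) = ∑ k ∈ Icc 0 d, d.choose k := by
    rw [show Icc r (d+r) = Icc (0+r) (d+r) from by rw [Nat.zero_add],
      ← Finset.map_add_right_Icc 0 d r, Finset.sum_map]
    apply Finset.sum_congr rfl
    intro x _
    simp [addRightEmbedding]
  have hrange : Icc 0 d = range (d+1) := by
    ext x; simp only [mem_Icc, Finset.mem_range]; omega
  rw [Finset.sum_congr rfl step, ← Finset.mul_sum, shift, hrange, Nat.sum_range_choose,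
    show d+r-r=d from by omega]

lemma T_top (n r : ℕ) :
    ∑ j ∈ Icc (r+1) (n+1), n.choose j * (j-1).choose r = T n r := by
  by_cases h : r ≤ n
  · rw [Finset.sum_Icc_succ_top (by omega)]
    have : n.choose (n+1) = 0 := Nat.choose_eq_zero_of_lt (by omega)
    simp [T, this]
  · have h1 : Icc (r+1) (n+1) = ∅ := Finset.Icc_eq_empty (by omega)
    have h2 : Icc (r+1) n = ∅ := Finset.Icc_eq_empty (by omega)
    simp [T, h1, h2]

lemma T_eq (n r : ℕ) : T n r = F (n - r) r := by
  induction n with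
  | zero =>
    have h1 : Icc (r+1) 0 = ∅ := Finset.Icc_eq_empty (by omega)
    simp [T, h1, F, Nat.zero_sub]
  | succ n ih =>
    by_cases h : r ≤ n
    · have e0 : T (n+1) r = ∑ k ∈ Icc r n, (n+1).choose (k+1) * k.choose r := by
        rw [T, sum_Icc_shift (fun j => (n+1).choose j * (j-1).choose r) r n]
        simp
      rw [e0]
      have step : ∀ k, (n+1).choose (k+1) * k.choose r
          = n.choose k * k.choose r + n.choose (k+1) * k.choose r := by
        intro k
        rw [Nat.choose_succ_succ]
        ring
      rw [Finset.sum_congr rfl (fun k _ => step k), Finset.sum_add_distrib]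
      have e1 : ∑ k ∈ Icc r n, n.choose (k+1) * k.choose r = T n r := by
        rw [← T_top n r, sum_Icc_shift (fun j => n.choose j * (j-1).choose r) r n]
        simp
      rw [e1, choose_sum_eq n r h, ih]
      have e2 : n + 1 - r = (n - r) + 1 := by omega
      rw [e2, F_succ]
      have e3 : n - r + r = n := by omega
      rw [e3]
      ring
    · have h1 : Icc (r+1) (n+1) = ∅ := Finset.Icc_eq_empty (by omega)
      have e1 : n + 1 - r = 0 := by omega
      simp [T, h1, e1, F]

theorem S_eq_T (m r : ℕ) (h : 2 * r + 2 ≤ m) : S m r = T (m - 1 - r) r := by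
  have e1 : S m r = S' m r := by
    rw [S, S']
    apply Finset.sum_subset
    · intro x hx
      simp only [mem_Icc] at *
      omega
    · intro x hx hnx
      simp only [mem_Icc] at hx hnx
      have : m.choose (2*x) = 0 := Nat.choose_eq_zero_of_lt (by omega)
      simp [this]
  rw [e1, (main m).1 r, T_eq]
  have e2 : m - 1 - r - r = m - 2*r - 1 := by omega
  rw [e2]
end

section
/- For all integers n and r with 1 ≤ r ≤ n−1, one has U(n,r) = V(n,r). -/
open Finset

/-- `U n r = ∑_{j=r+1}^{n} C(j−1,r)·2^{j−1−r}`. -/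
def U (n r : ℕ) : ℕ := ∑ j ∈ Icc (r + 1) n, (j - 1).choose r * 2 ^ (j - 1 - r)

/-- `V n r = ∑_{j=1}^{n−r} C(n−1−j,r−1)·2^{n−r−j}·(2^j−1)`. -/
def V (n r : ℕ) : ℕ :=
  ∑ j ∈ Icc 1 (n - r), (n - 1 - j).choose (r - 1) * 2 ^ (n - r - j) * (2 ^ j - 1)

lemma U_succ (n r : ℕ) (h : r + 1 ≤ n + 1) :
    U (n + 1) r = U n r + n.choose r * 2 ^ (n - r) := by
  rw [U, Finset.sum_Icc_succ_top h, ← U]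
  congr 2

lemma lemA (s m : ℕ) (hm : s + 1 ≤ m) :
    U (m + 1) (s + 1) + U m s = 2 ^ (m - s) * m.choose (s + 1) := by
  induction m, hm using Nat.le_induction with
  | base =>
      simp [U, Icc_self, show s+1+1 = s+2 from rfl]
  | succ m hm ih =>
      rw [U_succ (m+1) (s+1) (by omega), U_succ m s (by omega),
        show m+1-(s+1) = m-s by omega, show m+1-s = (m-s)+1 by omega,
        Nat.choose_succ_succ m s, pow_succ]
      simp only [Nat.succ_eq_add_one] at *
      ring_nf
      ring_nf at ih
      omega

lemma lemB (s m : ℕ) (hm : s + 1 ≤ m) :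
    V (m + 1) (s + 1) + U m s = 2 ^ (m - s) * m.choose (s + 1) := by
  have hV : V (m + 1) (s + 1) =
      ∑ k ∈ Icc (s+1) m, (k-1).choose s * 2 ^ (k-1-s) * (2 ^ (m+1-k) - 1) := by
    rw [V, show m+1-(s+1) = m-s by omega]
    refine Finset.sum_nbij' (fun j => m + 1 - j) (fun k => m + 1 - k) ?_ ?_ ?_ ?_ ?_
    · intro a ha; simp only [mem_Icc] at *; omega
    · intro a ha; simp only [mem_Icc] at *; omega
    · intro a ha; simp only [mem_Icc] at *; omega
    · intro a ha; simp only [mem_Icc] at *; omega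
    · intro a ha; simp only [mem_Icc] at ha
      rw [show m+1-1-a = (m+1-a)-1 by omega, show s+1-1 = s from rfl,
        show m-s-a = (m+1-a)-1-s by omega, show m+1-(m+1-a) = a by omega]
  rw [hV, U, ← Finset.sum_add_distrib]
  have hterm : ∀ k ∈ Icc (s+1) m,
      (k-1).choose s * 2 ^ (k-1-s) * (2 ^ (m+1-k) - 1) + (k-1).choose s * 2 ^ (k-1-s)
        = (k-1).choose s * 2 ^ (m-s) := by
    intro k hk; simp only [mem_Icc] at hk
    have h3 : 2 ^ (m+1-k) - 1 + 1 = 2 ^ (m+1-k) := Nat.sub_add_cancel Nat.one_le_two_pow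
    calc (k-1).choose s * 2 ^ (k-1-s) * (2 ^ (m+1-k) - 1) + (k-1).choose s * 2 ^ (k-1-s)
        = (k-1).choose s * 2 ^ (k-1-s) * ((2 ^ (m+1-k) - 1) + 1) := by ring
      _ = (k-1).choose s * (2 ^ (k-1-s) * 2 ^ (m+1-k)) := by rw [h3]; ring
      _ = (k-1).choose s * 2 ^ (m-s) := by
          rw [← pow_add, show k-1-s + (m+1-k) = m-s by omega]
  rw [Finset.sum_congr rfl hterm, ← Finset.sum_mul]
  have hre : ∑ k ∈ Icc (s+1) m, (k-1).choose s = ∑ t ∈ Icc s (m-1), t.choose s := by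
    refine Finset.sum_nbij' (fun k => k - 1) (fun t => t + 1) ?_ ?_ ?_ ?_ ?_ <;>
      intro a ha <;> simp only [mem_Icc] at * <;> omega
  rw [hre, Nat.sum_Icc_choose, show m-1+1 = m by omega, mul_comm]

theorem U_eq_V (n r : ℕ) (h1 : 1 ≤ r) (h2 : r + 1 ≤ n) : U n r = V n r := by
  obtain ⟨s, rfl⟩ : ∃ s, r = s + 1 := ⟨r - 1, by omega⟩
  obtain ⟨m, rfl⟩ : ∃ m, n = m + 1 := ⟨n - 1, by omega⟩
  have hA := lemA s m (by omega)
  have hB := lemB s m (by omega)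
  omega
end

section
/- For all integers n and r with 0 ≤ r ≤ n−1, one has T(n,r) = W(n,r) in the integers. -/
open Finset

/-- `W n r = 2^{n−r}·∑_{k=0}^{⌊r/2⌋} C(n−2−2k,r−2k) + (−1)^{r+1}` as an integer. -/
def W (n r : ℕ) : ℤ :=
  2 ^ (n - r) * ∑ k ∈ range (r / 2 + 1), ((n - 2 - 2 * k).choose (r - 2 * k) : ℤ)
    + (-1) ^ (r + 1)

theorem sumCC (n r : ℕ) (h : r ≤ n) :
    ∑ i ∈ Icc r n, n.choose i * i.choose r = 2 ^ (n - r) * n.choose r := by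
  rw [← Finset.Ico_add_one_right_eq_Icc, Finset.sum_Ico_eq_sum_range]
  have hnr : n + 1 - r = n - r + 1 := by omega
  rw [hnr]
  have : ∀ t ∈ range (n - r + 1), n.choose (r + t) * (r + t).choose r
      = n.choose r * (n - r).choose t := by
    intro t ht
    simp only [mem_range] at ht
    rw [Nat.choose_mul (by omega)]
    congr 2 <;> omega
  rw [Finset.sum_congr rfl this, ← Finset.mul_sum, Nat.sum_range_choose, Nat.mul_comm]

theorem T_step (n r : ℕ) (h : r ≤ n) :
    T (n + 1) r = T n r + 2 ^ (n - r) * n.choose r := by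
  have hT : ∀ m : ℕ, T m r = ∑ t ∈ range (m - r), m.choose (r + 1 + t) * (r + t).choose r := by
    intro m
    rw [T, ← Finset.Ico_add_one_right_eq_Icc, Finset.sum_Ico_eq_sum_range]
    apply Finset.sum_congr (by congr 1; omega)
    intro t _
    congr 2
    omega
  rw [hT, hT]
  have h1 : n + 1 - r = n - r + 1 := by omega
  rw [h1]
  have h2 : ∀ t ∈ range (n - r + 1), (n+1).choose (r + 1 + t) * (r + t).choose r
      = n.choose (r + t) * (r + t).choose r + n.choose (r + 1 + t) * (r + t).choose r := by
    intro t _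
    rw [show r + 1 + t = (r + t) + 1 by omega, Nat.choose_succ_succ', Nat.add_mul]
  rw [Finset.sum_congr rfl h2, Finset.sum_add_distrib]
  have h3 : ∑ t ∈ range (n - r + 1), n.choose (r + t) * (r + t).choose r
      = 2 ^ (n - r) * n.choose r := by
    rw [← sumCC n r h, ← Finset.Ico_add_one_right_eq_Icc, Finset.sum_Ico_eq_sum_range,
      show n + 1 - r = n - r + 1 by omega]
  have h4 : ∑ t ∈ range (n - r + 1), n.choose (r + 1 + t) * (r + t).choose r
      = ∑ t ∈ range (n - r), n.choose (r + 1 + t) * (r + t).choose r := by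
    rw [Finset.sum_range_succ, show r + 1 + (n - r) = n + 1 by omega, Nat.choose_succ_self,
      Nat.zero_mul, Nat.add_zero]
  rw [h3, h4, Nat.add_comm]

def A (n r : ℕ) : ℤ := ∑ k ∈ range (r / 2 + 1), ((n - 2 - 2 * k).choose (r - 2 * k) : ℤ)

lemma A_rec (m r : ℕ) : A (m + 2) (r + 2) = ((m).choose (r + 2) : ℤ) + A m r := by
  rw [A, A, show (r + 2) / 2 + 1 = r / 2 + 1 + 1 from by omega, Finset.sum_range_succ']
  have e0 : (m + 2 - 2 - 2 * 0) = m := by omega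
  have e1 : (r + 2 - 2 * 0) = r + 2 := by omega
  rw [e0, e1, add_comm]
  congr 1
  apply Finset.sum_congr rfl
  intro k _
  congr 2 <;> omega

lemma A_zero (n : ℕ) : A n 0 = 1 := by simp [A]

lemma A_one (n : ℕ) : A n 1 = ((n - 2).choose 1 : ℤ) := by simp [A]

lemma pascal3 (m s : ℕ) : 2 * (m + 1).choose (s + 2) + m.choose s
    = m.choose (s + 2) + (m + 2).choose (s + 2) := by
  simp [Nat.choose_succ_succ']
  ring

lemma key (r : ℕ) : ∀ d : ℕ, 2 * A (r + 2 + d) r = A (r + 1 + d) r + ((r + 1 + d).choose r : ℤ) := by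
  induction r using Nat.strong_induction_on with
  | _ r ih =>
    obtain _ | _ | r := r
    · intro d; rw [A_zero, A_zero]; simp
    · intro d
      rw [A_one, A_one, show 1 + 2 + d - 2 = 1 + d from by omega,
        show 1 + 1 + d - 2 = d from by omega, Nat.choose_one_right, Nat.choose_one_right,
        Nat.choose_one_right]
      push_cast; ring
    · intro d
      have hih := ih r (by omega) d
      rw [show r + 2 + 2 + d = (r + 1 + d) + 1 + 2 from by omega,
        show r + 2 + 1 + d = (r + 1 + d) + 2 from by omega, A_rec, A_rec]
      rw [show r + 2 + d = (r + 1 + d) + 1 from by omega] at hih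
      have hp := pascal3 (r + 1 + d) r
      zify at hp
      linarith

lemma W_eq (n r : ℕ) : W n r = 2 ^ (n - r) * A n r + (-1) ^ (r + 1) := rfl

lemma A_base (r : ℕ) : A (r + 1) r = if Even r then 1 else 0 := by
  rcases Nat.even_or_odd r with he | ho
  · obtain ⟨m, rfl⟩ := he
    rw [A, show (m + m) / 2 + 1 = m + 1 from by omega, Finset.sum_range_succ]
    have h0 : ∀ k ∈ range m, ((m + m + 1 - 2 - 2 * k).choose (m + m - 2 * k) : ℤ) = 0 := by
      intro k hk
      simp only [mem_range] at hk
      rw [Nat.choose_eq_zero_of_lt (by omega)]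
      simp
    rw [Finset.sum_congr rfl h0]
    rw [show m + m + 1 - 2 - 2 * m = 0 from by omega, show m + m - 2 * m = 0 from by omega]
    simp
  · obtain ⟨m, rfl⟩ := ho
    rw [A]
    have h0 : ∀ k ∈ range ((2 * m + 1) / 2 + 1),
        ((2 * m + 1 + 1 - 2 - 2 * k).choose (2 * m + 1 - 2 * k) : ℤ) = 0 := by
      intro k hk
      simp only [mem_range] at hk
      rw [Nat.choose_eq_zero_of_lt (by omega)]
      simp
    rw [Finset.sum_congr rfl h0]
    simp [Nat.even_add_one, parity_simps]

lemma W_step (n r : ℕ) (h : r + 1 ≤ n) :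
    W (n + 1) r = W n r + 2 ^ (n - r) * (n.choose r : ℤ) := by
  have hk := key r (n - (r + 1))
  rw [show r + 2 + (n - (r + 1)) = n + 1 from by omega,
    show r + 1 + (n - (r + 1)) = n from by omega] at hk
  rw [W_eq, W_eq, show n + 1 - r = (n - r) + 1 from by omega, pow_succ]
  have : (2:ℤ) ^ (n - r) * 2 * A (n + 1) r = 2 ^ (n - r) * (2 * A (n + 1) r) := by ring
  rw [this, hk]
  ring

theorem T_eq_W (n r : ℕ) (h : r + 1 ≤ n) : (T n r : ℤ) = W n r := by
  induction n, h using Nat.le_induction with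
  | base =>
    have hT : T (r + 1) r = 1 := by
      rw [T, Finset.Icc_self, Finset.sum_singleton]
      simp
    rw [hT, W_eq, A_base, show r + 1 - r = 1 from by omega]
    rcases Nat.even_or_odd r with he | ho
    · rw [if_pos he, (by simp [he.add_one] : ((-1:ℤ)) ^ (r+1) = -1)]
      norm_num
    · rw [if_neg (by simpa using ho), (by simp [ho, Odd.add_one] : ((-1:ℤ)) ^ (r+1) = 1)]
      norm_num
  | succ n hn ih =>
    have hs := T_step n r (by omega)
    have : (T (n + 1) r : ℤ) = (T n r : ℤ) + 2 ^ (n - r) * (n.choose r : ℤ) := by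
      exact_mod_cast congrArg (Nat.cast : ℕ → ℤ) hs
    rw [this, ih, W_step n r hn]
end

section
/- For all integers m and r with 0 ≤ r and 2r + 2 ≤ m, the cardinality of D⁺(m,r) equals S(m,r). -/
open Finset

/-- A tile: a white square, a black square, or a domino. -/
inductive Tile : Type
  | white : Tile
  | black : Tile
  | domino : Tile
  deriving DecidableEq

/-- The number of cells covered by a tile. -/
def Tile.len : Tile → ℕ
  | .white => 1
  | .black => 1
  | .domino => 2

/-- `D m r`: domino arrangements covering a board of `m` cells, with exactly `r`
dominoes, whose first tile is a black square. -/
def D (m r : ℕ) : Set (List Tile) :=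
  {l | (l.map Tile.len).sum = m ∧ l.count Tile.domino = r ∧ l.head? = some Tile.black}

/-- `D⁺ m r`: members of `D m r` containing a white square after the last domino. -/
def Dplus (m r : ℕ) : Set (List Tile) :=
  {l | l ∈ D m r ∧ ∃ a b : List Tile, l = a ++ Tile.white :: b ∧ Tile.domino ∉ b}

-- ### basic facts
instance : Fintype Tile :=
  ⟨⟨{Tile.white, Tile.black, Tile.domino}, by decide⟩, fun t => by cases t <;> decide⟩

lemma Tile.len_pos (t : Tile) : 1 ≤ t.len := by cases t <;> simp [Tile.len]

lemma Tile.len_le (t : Tile) : t.len ≤ 2 := by cases t <;> simp [Tile.len]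

lemma length_le_lensum (l : List Tile) : l.length ≤ (l.map Tile.len).sum := by
  induction l with
  | nil => simp
  | cons a l ih => have := a.len_pos; simp only [List.map_cons, List.sum_cons, List.length_cons]; omega

lemma finite_D (n r : ℕ) : (D n r).Finite :=
  (List.finite_length_le Tile n).subset (fun l hl => by
    simpa using le_trans (length_le_lensum l) (le_of_eq hl.1))

lemma Dplus_subset (m r : ℕ) : Dplus m r ⊆ D m r := fun _ h => h.1

lemma finite_Dplus (m r : ℕ) : (Dplus m r).Finite := (finite_D m r).subset (Dplus_subset m r)

lemma lensum_eq_zero {l : List Tile} (h : (l.map Tile.len).sum = 0) : l = [] := by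
  cases l with
  | nil => rfl
  | cons a t => exfalso; have := a.len_pos; simp at h; omega

lemma lensum_eq_one {l : List Tile} (h : (l.map Tile.len).sum = 1) :
    l = [Tile.white] ∨ l = [Tile.black] := by
  cases l with
  | nil => simp at h
  | cons a t =>
    have h1 := a.len_pos
    simp only [List.map_cons, List.sum_cons] at h
    have ht : (t.map Tile.len).sum = 0 := by have := a.len_le; omega
    have := lensum_eq_zero ht
    subst this
    cases a with
    | white => left; rfl
    | black => right; rfl
    | domino => exfalso; simp [Tile.len] at h

-- concat helpers
lemma concat_eq_concat {α : Type*} {l1 l2 : List α} {a b : α} (h : l1 ++ [a] = l2 ++ [b]) :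
    l1 = l2 ∧ a = b := by
  have hb : a = b := by
    have := congrArg List.getLast? h
    rw [List.getLast?_concat, List.getLast?_concat] at this
    exact Option.some_injective _ this
  subst hb
  exact ⟨List.append_left_injective _ h, rfl⟩

lemma head?_concat {l : List Tile} (h : l ≠ []) (t : Tile) : (l ++ [t]).head? = l.head? :=
  List.head?_append_of_ne_nil _ h

lemma mem_D_concat {l : List Tile} {t : Tile} {n r : ℕ} (hl : l ≠ []) :
    l ++ [t] ∈ D n r ↔
      (l.map Tile.len).sum + t.len = n ∧ l.count Tile.domino + [t].count Tile.domino = r ∧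
        l.head? = some Tile.black := by
  simp only [D, Set.mem_setOf_eq, List.map_append, List.sum_append, List.count_append,
    head?_concat hl, List.map_cons, List.map_nil, List.sum_cons, List.sum_nil, add_zero]

lemma ne_nil_of_mem_D {l : List Tile} {n r : ℕ} (h : l ∈ D n r) : l ≠ [] := by
  obtain ⟨-, -, hh⟩ := h
  intro hnil
  rw [hnil] at hh
  simp at hh

lemma two_le_length {l : List Tile} {n r : ℕ} (h : l ∈ D n r) (hn : 2 ≤ n) :
    ∃ l' t, l = l' ++ [t] ∧ l' ≠ [] := by
  obtain ⟨hs, hc, hh⟩ := h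
  obtain rfl | ⟨L, b, rfl⟩ := l.eq_nil_or_concat
  · simp at hh
  · refine ⟨L, b, by simp, ?_⟩
    rintro rfl
    rw [List.concat_eq_append, List.nil_append] at hh hs
    simp only [List.head?_cons, Option.some.injEq] at hh
    subst hh
    simp [Tile.len] at hs
    omega

-- base cases
lemma D_zero (r : ℕ) : D 0 r = ∅ := by
  ext l
  simp only [Set.mem_empty_iff_false, iff_false]
  rintro ⟨hs, -, hh⟩
  rw [lensum_eq_zero hs] at hh
  simp at hh

lemma D_one_zero : D 1 0 = {[Tile.black]} := by
  ext l
  constructor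
  · rintro ⟨hs, hc, hh⟩
    rcases lensum_eq_one hs with rfl | rfl
    · simp at hh
    · rfl
  · rintro rfl
    exact ⟨rfl, rfl, rfl⟩

lemma D_one_pos (r : ℕ) (hr : 1 ≤ r) : D 1 r = ∅ := by
  ext l
  simp only [Set.mem_empty_iff_false, iff_false]
  rintro ⟨hs, hc, hh⟩
  rcases lensum_eq_one hs with rfl | rfl <;> simp_all <;> omega

lemma D_two_zero : D 2 0 = {[Tile.black, Tile.white], [Tile.black, Tile.black]} := by
  ext l
  constructor
  · rintro ⟨hs, hc, hh⟩
    cases l with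
    | nil => simp at hh
    | cons a t =>
      simp only [List.head?_cons, Option.some.injEq] at hh
      subst hh
      simp only [List.map_cons, List.sum_cons] at hs
      have ht : (t.map Tile.len).sum = 1 := by simp [Tile.len] at hs; omega
      rcases lensum_eq_one ht with rfl | rfl
      · left; rfl
      · right; rfl
  · rintro (rfl | rfl) <;> exact ⟨rfl, rfl, rfl⟩

lemma D_two_pos (r : ℕ) (hr : 1 ≤ r) : D 2 r = ∅ := by
  ext l
  simp only [Set.mem_empty_iff_false, iff_false]
  rintro ⟨hs, hc, hh⟩
  cases l with
  | nil => simp at hh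
  | cons a t =>
    simp only [List.head?_cons, Option.some.injEq] at hh
    subst hh
    simp only [List.map_cons, List.sum_cons] at hs
    have ht : (t.map Tile.len).sum = 1 := by simp [Tile.len] at hs; omega
    rcases lensum_eq_one ht with rfl | rfl <;> simp_all <;> omega

-- decompositions
lemma D_decomp (n r : ℕ) (hn : 2 ≤ n) (hr : 1 ≤ r) :
    D n r = (· ++ [Tile.white]) '' D (n - 1) r ∪ (· ++ [Tile.black]) '' D (n - 1) r ∪
      (· ++ [Tile.domino]) '' D (n - 2) (r - 1) := by
  ext l
  constructor
  · intro h
    obtain ⟨l', t, rfl, hl'⟩ := two_le_length h hn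
    rw [mem_D_concat hl'] at h
    obtain ⟨hs, hc, hh⟩ := h
    cases t with
    | white =>
      left; left
      refine ⟨l', ⟨?_, ?_, hh⟩, rfl⟩ <;> simp [Tile.len] at hs hc ⊢ <;> omega
    | black =>
      left; right
      refine ⟨l', ⟨?_, ?_, hh⟩, rfl⟩ <;> simp [Tile.len] at hs hc ⊢ <;> omega
    | domino =>
      right
      refine ⟨l', ⟨?_, ?_, hh⟩, rfl⟩ <;> simp [Tile.len] at hs hc ⊢ <;> omega
  · rintro ((⟨l', h, rfl⟩ | ⟨l', h, rfl⟩) | ⟨l', h, rfl⟩) <;>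
    · have hl' := ne_nil_of_mem_D h
      obtain ⟨hs, hc, hh⟩ := h
      rw [mem_D_concat hl']
      refine ⟨?_, ?_, hh⟩ <;> simp [Tile.len] <;> omega

lemma D_decomp0 (n : ℕ) (hn : 2 ≤ n) :
    D n 0 = (· ++ [Tile.white]) '' D (n - 1) 0 ∪ (· ++ [Tile.black]) '' D (n - 1) 0 := by
  ext l
  constructor
  · intro h
    obtain ⟨l', t, rfl, hl'⟩ := two_le_length h hn
    rw [mem_D_concat hl'] at h
    obtain ⟨hs, hc, hh⟩ := h
    cases t with
    | white =>
      left
      refine ⟨l', ⟨?_, ?_, hh⟩, rfl⟩ <;> simp [Tile.len] at hs hc ⊢ <;> omega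
    | black =>
      right
      refine ⟨l', ⟨?_, ?_, hh⟩, rfl⟩ <;> simp [Tile.len] at hs hc ⊢ <;> omega
    | domino => exfalso; simp at hc
  · rintro (⟨l', h, rfl⟩ | ⟨l', h, rfl⟩) <;>
    · have hl' := ne_nil_of_mem_D h
      obtain ⟨hs, hc, hh⟩ := h
      rw [mem_D_concat hl']
      refine ⟨?_, ?_, hh⟩ <;> simp [Tile.len] <;> omega

lemma Dplus_decomp (m r : ℕ) (hm : 2 ≤ m) :
    Dplus m r = (· ++ [Tile.white]) '' D (m - 1) r ∪ (· ++ [Tile.black]) '' Dplus (m - 1) r := by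
  ext l
  constructor
  · rintro ⟨hD, a, b, heq, hb⟩
    obtain ⟨l', t, rfl, hl'⟩ := two_le_length hD hm
    rw [mem_D_concat hl'] at hD
    obtain ⟨hs, hc, hh⟩ := hD
    cases t with
    | white =>
      left
      refine ⟨l', ⟨?_, ?_, hh⟩, rfl⟩ <;> simp [Tile.len] at hs hc ⊢ <;> omega
    | black =>
      right
      -- the witness white is inside l'
      obtain rfl | ⟨b', u, rfl⟩ := b.eq_nil_or_concat
      · exfalso
        have := (concat_eq_concat heq).2
        simp at this
      · rw [List.concat_eq_append] at heq hb
        rw [← List.cons_append, ← List.append_assoc] at heq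
        obtain ⟨rfl, rfl⟩ := concat_eq_concat heq
        refine ⟨a ++ Tile.white :: b', ⟨⟨?_, ?_, hh⟩, ⟨a, b', rfl, fun hd => hb (by simp [hd])⟩⟩, rfl⟩ <;>
          simp [Tile.len] at hs hc ⊢ <;> omega
    | domino =>
      exfalso
      obtain rfl | ⟨b', u, rfl⟩ := b.eq_nil_or_concat
      · have := (concat_eq_concat heq).2
        simp at this
      · rw [List.concat_eq_append] at heq hb
        rw [← List.cons_append, ← List.append_assoc] at heq
        obtain ⟨-, rfl⟩ := concat_eq_concat heq
        exact hb (by simp)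
  · rintro (⟨l', h, rfl⟩ | ⟨l', h, rfl⟩)
    · have hl' := ne_nil_of_mem_D h
      obtain ⟨hs, hc, hh⟩ := h
      refine ⟨?_, ⟨l', [], rfl, by simp⟩⟩
      rw [mem_D_concat hl']
      refine ⟨?_, ?_, hh⟩ <;> simp [Tile.len] at hs hc ⊢ <;> omega
    · obtain ⟨h, a, b, rfl, hb⟩ := h
      have hl' := ne_nil_of_mem_D h
      obtain ⟨hs, hc, hh⟩ := h
      refine ⟨?_, ⟨a, b ++ [Tile.black], by simp, by simp [hb]⟩⟩
      rw [mem_D_concat hl']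
      refine ⟨?_, ?_, hh⟩ <;> simp [Tile.len] at hs hc ⊢ <;> omega

lemma Dplus_zero (r : ℕ) : Dplus 0 r = ∅ :=
  Set.eq_empty_of_subset_empty ((D_zero r) ▸ Dplus_subset 0 r)

lemma Dplus_one (r : ℕ) : Dplus 1 r = ∅ := by
  ext l
  simp only [Set.mem_empty_iff_false, iff_false]
  rintro ⟨⟨hs, -, hh⟩, a, b, rfl, -⟩
  simp [Tile.len] at hs
  have ha : a = [] := lensum_eq_zero (by omega)
  subst ha
  simp at hh

-- ### cardinalities
def gc (n r : ℕ) : ℕ := (n - r - 1).choose r * 2 ^ (n - 2 * r - 1)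

lemma gc_zero {n r : ℕ} (h1 : 1 ≤ n) (h2 : n ≤ 2 * r) : gc n r = 0 := by
  have : n - r - 1 < r := by omega
  simp [gc, Nat.choose_eq_zero_of_lt this]

lemma gc_one (r : ℕ) : gc (2 * r + 1) r = 1 := by
  have e1 : 2 * r + 1 - r - 1 = r := by omega
  have e2 : 2 * r + 1 - 2 * r - 1 = 0 := by omega
  simp [gc, e1, e2]

lemma gc_rec (k r : ℕ) : gc (k + 3) (r + 1) = gc (k + 2) (r + 1) + gc (k + 2) (r + 1) + gc (k + 1) r := by
  rcases le_or_gt (2 * r) k with hk | hk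
  · obtain ⟨j, rfl⟩ : ∃ j, k = 2 * r + j := ⟨k - 2 * r, by omega⟩
    rcases j with _ | i
    · have e1 : 2 * r + 0 + 3 - (r + 1) - 1 = r + 1 := by omega
      have e2 : 2 * r + 0 + 3 - 2 * (r + 1) - 1 = 0 := by omega
      have e3 : 2 * r + 0 + 2 - (r + 1) - 1 = r := by omega
      have e4 : 2 * r + 0 + 1 - r - 1 = r := by omega
      have e5 : 2 * r + 0 + 1 - 2 * r - 1 = 0 := by omega
      have e6 : 2 * r + 0 + 2 - 2 * (r + 1) - 1 = 0 := by omega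
      rw [gc, gc, gc, e1, e2, e3, e4, e5, e6, Nat.choose_self, Nat.choose_self,
        Nat.choose_succ_self]
      ring
    · have e1 : 2 * r + (i + 1) + 3 - (r + 1) - 1 = (r + i + 1) + 1 := by omega
      have e2 : 2 * r + (i + 1) + 3 - 2 * (r + 1) - 1 = i + 1 := by omega
      have e3 : 2 * r + (i + 1) + 2 - (r + 1) - 1 = r + i + 1 := by omega
      have e4 : 2 * r + (i + 1) + 2 - 2 * (r + 1) - 1 = i := by omega
      have e5 : 2 * r + (i + 1) + 1 - r - 1 = r + i + 1 := by omega
      have e6 : 2 * r + (i + 1) + 1 - 2 * r - 1 = i + 1 := by omega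
      rw [gc, gc, gc, e1, e2, e3, e4, e5, e6, Nat.choose_succ_succ]
      ring
  · rw [gc_zero (by omega) (by omega), gc_zero (by omega) (by omega),
      gc_zero (by omega) (by omega)]

lemma ncard_img (s : Set (List Tile)) (t : Tile) : ((· ++ [t]) '' s).ncard = s.ncard :=
  Set.ncard_image_of_injective s (List.append_left_injective [t])

lemma disj_img (s s' : Set (List Tile)) {t u : Tile} (h : t ≠ u) :
    Disjoint ((· ++ [t]) '' s) ((· ++ [u]) '' s') := by
  rw [Set.disjoint_left]
  rintro x ⟨l1, -, rfl⟩ ⟨l2, -, heq⟩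
  exact h ((concat_eq_concat heq).2).symm

lemma gc_r0 (n : ℕ) : gc (n + 1) 0 = 2 ^ n := by simp [gc]

lemma card_D : ∀ n, 1 ≤ n → ∀ r, (D n r).ncard = gc n r := by
  intro n
  induction n using Nat.strong_induction_on with
  | _ n ih =>
    intro hn r
    match n, hn with
    | 1, _ =>
      rcases r with _ | r
      · rw [D_one_zero, Set.ncard_singleton]; simp [gc]
      · rw [D_one_pos _ (by omega), Set.ncard_empty]
        have e : 1 - (r + 1) - 1 = 0 := by omega
        rw [gc, e]
        simp
    | 2, _ =>
      rcases r with _ | r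
      · rw [D_two_zero, Set.ncard_pair (by decide)]
        have e : 2 - 0 - 1 = 1 := by omega
        rw [gc, e]
        simp
      · rw [D_two_pos _ (by omega), Set.ncard_empty]
        have e : 2 - (r + 1) - 1 = 0 := by omega
        rw [gc, e]
        simp [Nat.choose_eq_zero_of_lt]
    | (k + 3), _ =>
      have e1 : k + 3 - 1 = k + 2 := by omega
      have e2 : k + 3 - 2 = k + 1 := by omega
      rcases r with _ | r
      · rw [D_decomp0 (k + 3) (by omega), e1,
          Set.ncard_union_eq (disj_img _ _ (by decide)) ((finite_D _ _).image _)
            ((finite_D _ _).image _), ncard_img, ncard_img,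
          ih (k + 2) (by omega) (by omega) 0, gc_r0, gc_r0, pow_succ]
        ring
      · rw [D_decomp (k + 3) (r + 1) (by omega) (by omega), e1, e2]
        have e3 : r + 1 - 1 = r := by omega
        rw [e3,
          Set.ncard_union_eq
            (Set.disjoint_union_left.mpr ⟨disj_img _ _ (by decide), disj_img _ _ (by decide)⟩)
            (((finite_D _ _).image _).union ((finite_D _ _).image _)) ((finite_D _ _).image _),
          Set.ncard_union_eq (disj_img _ _ (by decide)) ((finite_D _ _).image _)
            ((finite_D _ _).image _), ncard_img, ncard_img, ncard_img,
          ih (k + 2) (by omega) (by omega) (r + 1), ih (k + 1) (by omega) (by omega) r, gc_rec]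

lemma card_Dplus_sum (m r : ℕ) : (Dplus m r).ncard = ∑ t ∈ Ico 1 m, gc t r := by
  induction m with
  | zero => rw [Dplus_zero]; simp
  | succ m ihm =>
    rcases Nat.eq_zero_or_pos m with rfl | hm
    · rw [Dplus_one]; simp
    · have e1 : m + 1 - 1 = m := by omega
      rw [Dplus_decomp (m + 1) r (by omega), e1,
        Set.ncard_union_eq (disj_img _ _ (by decide)) ((finite_D _ _).image _)
          ((finite_Dplus _ _).image _), ncard_img, ncard_img, card_D m hm r, ihm,
        Finset.sum_Ico_succ_top hm]
      ring

-- ### binomial sums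
def Bsum (n r : ℕ) : ℕ := ∑ i ∈ Icc (r + 1) ((n + 1) / 2), n.choose (2 * i - 1) * (i - 1).choose r

def Asum (n r : ℕ) : ℕ := ∑ j ∈ Icc r (n / 2), n.choose (2 * j) * j.choose r

def ac : ℕ → ℕ → ℕ
  | n, 0 => 2 ^ (n - 1)
  | n, (r + 1) => ((n - r - 1).choose (r + 1) + (n - r - 2).choose r) * 2 ^ (n - 2 * r - 3)

lemma S_succ (m r : ℕ) : S (m + 1) r = S m r + Bsum m r := by
  have h1 : ∀ i ∈ Icc (r + 1) ((m + 1) / 2), (m + 1).choose (2 * i) * (i - 1).choose r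
      = m.choose (2 * i) * (i - 1).choose r + m.choose (2 * i - 1) * (i - 1).choose r := by
    intro i hi
    have hi1 : 1 ≤ i := le_trans (by omega) (mem_Icc.mp hi).1
    obtain ⟨k, hk⟩ : ∃ k, 2 * i = k + 1 := ⟨2 * i - 1, by omega⟩
    rw [hk, Nat.choose_succ_succ]
    simp only [Nat.add_sub_cancel]
    ring
  rw [S, Finset.sum_congr rfl h1, Finset.sum_add_distrib]
  congr 1
  · rw [S]
    refine (Finset.sum_subset (Finset.Icc_subset_Icc_right (by omega)) ?_).symm
    intro x hx hnx
    simp only [mem_Icc, not_and, not_le] at hx hnx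
    rw [Nat.choose_eq_zero_of_lt (show m < 2 * x by omega), zero_mul]

lemma Bsum_succ (n r : ℕ) : Bsum (n + 1) r = Bsum n r + Asum n r := by
  have h1 : ∀ i ∈ Icc (r + 1) ((n + 1 + 1) / 2), (n + 1).choose (2 * i - 1) * (i - 1).choose r
      = n.choose (2 * i - 1) * (i - 1).choose r + n.choose (2 * i - 2) * (i - 1).choose r := by
    intro i hi
    have hi1 : 1 ≤ i := le_trans (by omega) (mem_Icc.mp hi).1
    obtain ⟨k, hk⟩ : ∃ k, 2 * i - 1 = k + 1 := ⟨2 * i - 2, by omega⟩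
    have hk2 : 2 * i - 2 = k := by omega
    rw [hk, hk2, Nat.choose_succ_succ]
    ring
  rw [Bsum, Finset.sum_congr rfl h1, Finset.sum_add_distrib]
  congr 1
  · rw [Bsum]
    refine (Finset.sum_subset (Finset.Icc_subset_Icc_right (by omega)) ?_).symm
    intro x hx hnx
    simp only [mem_Icc, not_and, not_le] at hx hnx
    rw [Nat.choose_eq_zero_of_lt (show n < 2 * x - 1 by omega), zero_mul]
  · rw [Asum]
    have e : (n + 1 + 1) / 2 = n / 2 + 1 := by omega
    rw [e, ← Finset.map_add_right_Icc r (n / 2) 1, Finset.sum_map]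
    refine Finset.sum_congr rfl fun j hj => ?_
    simp only [addRightEmbedding_apply]
    have e1 : 2 * (j + 1) - 2 = 2 * j := by omega
    have e2 : j + 1 - 1 = j := by omega
    rw [e1, e2]

lemma Asum_succ0 (n : ℕ) : Asum (n + 1) 0 = Asum n 0 + Bsum n 0 := by
  have hins : ∀ M : ℕ, Icc 0 M = insert 0 (Icc 1 M) := by
    intro M; ext x; simp [mem_Icc]; omega
  have h1 : ∀ j ∈ Icc 1 ((n + 1) / 2), (n + 1).choose (2 * j) * j.choose 0
      = n.choose (2 * j) * j.choose 0 + n.choose (2 * j - 1) * (j - 1).choose 0 := by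
    intro j hj
    have hj1 : 1 ≤ j := (mem_Icc.mp hj).1
    obtain ⟨k, hk⟩ : ∃ k, 2 * j = k + 1 := ⟨2 * j - 1, by omega⟩
    simp only [Nat.choose_zero_right, mul_one]
    rw [hk, Nat.choose_succ_succ]
    simp only [Nat.add_sub_cancel]
    ring
  rw [Asum, Asum, Bsum, hins, hins, Finset.sum_insert (by simp), Finset.sum_insert (by simp),
    Finset.sum_congr rfl h1, Finset.sum_add_distrib]
  have h2 : ∑ j ∈ Icc 1 ((n + 1) / 2), n.choose (2 * j) * j.choose 0
      = ∑ j ∈ Icc 1 (n / 2), n.choose (2 * j) * j.choose 0 := by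
    refine (Finset.sum_subset (Finset.Icc_subset_Icc_right (by omega)) ?_).symm
    intro x hx hnx
    simp only [mem_Icc, not_and, not_le] at hx hnx
    rw [Nat.choose_eq_zero_of_lt (show n < 2 * x by omega), zero_mul]
  rw [h2]
  simp only [Nat.choose_zero_right, mul_one, Nat.mul_zero, Nat.choose_zero_right]
  ring

lemma Asum_succ (n r : ℕ) : Asum (n + 1) (r + 1)
    = Asum n (r + 1) + Bsum n (r + 1) + Bsum n r := by
  have h1 : ∀ j ∈ Icc (r + 1) ((n + 1) / 2), (n + 1).choose (2 * j) * j.choose (r + 1)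
      = n.choose (2 * j) * j.choose (r + 1) + n.choose (2 * j - 1) * (j - 1).choose (r + 1)
        + n.choose (2 * j - 1) * (j - 1).choose r := by
    intro j hj
    have hj1 : 1 ≤ j := le_trans (by omega) (mem_Icc.mp hj).1
    have e2 : j.choose (r + 1) = (j - 1).choose r + (j - 1).choose (r + 1) := by
      conv_lhs => rw [show j = (j - 1) + 1 by omega]
      rw [Nat.choose_succ_succ]
    obtain ⟨k, hk⟩ : ∃ k, 2 * j = k + 1 := ⟨2 * j - 1, by omega⟩
    rw [hk, Nat.choose_succ_succ, e2]
    simp only [Nat.add_sub_cancel]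
    ring
  rw [Asum, Finset.sum_congr rfl h1, Finset.sum_add_distrib, Finset.sum_add_distrib]
  congr 1
  · congr 1
    · rw [Asum]
      refine (Finset.sum_subset (Finset.Icc_subset_Icc_right (by omega)) ?_).symm
      intro x hx hnx
      simp only [mem_Icc, not_and, not_le] at hx hnx
      rw [Nat.choose_eq_zero_of_lt (show n < 2 * x by omega), zero_mul]
    · rw [Bsum]
      refine (Finset.sum_subset (Finset.Icc_subset_Icc (by omega) le_rfl) ?_).symm
      intro x hx hnx
      simp only [mem_Icc, not_and, not_le] at hx hnx
      have hx1 : x = r + 1 := by omega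
      subst hx1
      rw [Nat.choose_eq_zero_of_lt (show r + 1 - 1 < r + 1 by omega), mul_zero]

lemma Bsum_base (r : ℕ) : Bsum (2 * r + 1) r = 1 := by
  have e : (2 * r + 1 + 1) / 2 = r + 1 := by omega
  rw [Bsum, e, Finset.Icc_self, Finset.sum_singleton]
  have e1 : 2 * (r + 1) - 1 = 2 * r + 1 := by omega
  have e2 : r + 1 - 1 = r := by omega
  rw [e1, e2, Nat.choose_self, Nat.choose_self]

lemma Bsum_empty {n r : ℕ} (h : n ≤ 2 * r) : Bsum n r = 0 := by
  rw [Bsum, Finset.Icc_eq_empty (by omega), Finset.sum_empty]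

lemma Asum_base (r : ℕ) : Asum (2 * r + 1) r = 2 * r + 1 := by
  have e : (2 * r + 1) / 2 = r := by omega
  rw [Asum, e, Finset.Icc_self, Finset.sum_singleton, Nat.choose_self, mul_one]
  rw [Nat.choose_succ_self_right]

lemma ac_base (r : ℕ) : ac (2 * r + 1) r = 2 * r + 1 := by
  rcases r with _ | r
  · simp [ac]
  · have e1 : 2 * (r + 1) + 1 - r - 1 = r + 2 := by omega
    have e2 : 2 * (r + 1) + 1 - r - 2 = r + 1 := by omega
    have e3 : 2 * (r + 1) + 1 - 2 * r - 3 = 0 := by omega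
    rw [ac, e1, e2, e3, Nat.choose_succ_self_right, Nat.choose_succ_self_right]
    ring

lemma AR1 {n r : ℕ} (h : 2 * r + 1 ≤ n) : gc n r + ac n r = gc (n + 1) r := by
  rcases r with _ | r
  · obtain ⟨j, rfl⟩ : ∃ j, n = j + 1 := ⟨n - 1, by omega⟩
    rw [gc_r0, gc_r0, ac]
    simp only [Nat.add_sub_cancel]
    rw [pow_succ]
    ring
  · obtain ⟨j, rfl⟩ : ∃ j, n = 2 * r + 3 + j := ⟨n - (2 * r + 3), by omega⟩
    have e1 : 2 * r + 3 + j - (r + 1) - 1 = r + j + 1 := by omega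
    have e2 : 2 * r + 3 + j - 2 * (r + 1) - 1 = j := by omega
    have e3 : 2 * r + 3 + j - r - 1 = (r + j + 1) + 1 := by omega
    have e4 : 2 * r + 3 + j - r - 2 = r + j + 1 := by omega
    have e5 : 2 * r + 3 + j - 2 * r - 3 = j := by omega
    have e6 : 2 * r + 3 + j + 1 - (r + 1) - 1 = (r + j + 1) + 1 := by omega
    have e7 : 2 * r + 3 + j + 1 - 2 * (r + 1) - 1 = j + 1 := by omega
    rw [gc, gc, ac, e1, e2, e3, e4, e5, e6, e7, Nat.choose_succ_succ (r + j + 1) r, pow_succ]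
    ring

lemma AR3 {n r : ℕ} (h : 2 * r + 3 ≤ n) :
    ac n (r + 1) + gc n (r + 1) + gc n r = ac (n + 1) (r + 1) := by
  obtain ⟨j, rfl⟩ : ∃ j, n = 2 * r + 3 + j := ⟨n - (2 * r + 3), by omega⟩
  have e1 : 2 * r + 3 + j - r - 1 = (r + j + 1) + 1 := by omega
  have e2 : 2 * r + 3 + j - r - 2 = r + j + 1 := by omega
  have e3 : 2 * r + 3 + j - 2 * r - 3 = j := by omega
  have e4 : 2 * r + 3 + j - (r + 1) - 1 = r + j + 1 := by omega
  have e5 : 2 * r + 3 + j - 2 * (r + 1) - 1 = j := by omega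
  have e6 : 2 * r + 3 + j - 2 * r - 1 = j + 2 := by omega
  have e7 : 2 * r + 3 + j + 1 - r - 1 = ((r + j + 1) + 1) + 1 := by omega
  have e8 : 2 * r + 3 + j + 1 - r - 2 = (r + j + 1) + 1 := by omega
  have e9 : 2 * r + 3 + j + 1 - 2 * r - 3 = j + 1 := by omega
  rw [ac, ac, gc, gc, e1, e2, e3, e4, e5, e6, e7, e8, e9,
    Nat.choose_succ_succ ((r + j + 1) + 1) r, Nat.choose_succ_succ (r + j + 1) r,
    pow_succ, pow_succ]
  simp only [Nat.succ_eq_add_one]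
  ring

lemma BA : ∀ n : ℕ, (∀ r, 1 ≤ n → Bsum n r = gc n r) ∧ (∀ r, 2 * r + 1 ≤ n → Asum n r = ac n r) := by
  intro n
  induction n using Nat.strong_induction_on with
  | _ n ih =>
    constructor
    · intro r hn
      rcases lt_trichotomy n (2 * r + 1) with h | h | h
      · rw [Bsum_empty (by omega), gc_zero hn (by omega)]
      · subst h; rw [Bsum_base, gc_one]
      · obtain ⟨n', rfl⟩ : ∃ n', n = n' + 1 := ⟨n - 1, by omega⟩
        rw [Bsum_succ, (ih n' (by omega)).1 r (by omega), (ih n' (by omega)).2 r (by omega),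
          AR1 (by omega)]
    · intro r h2
      rcases eq_or_lt_of_le h2 with h | h
      · rw [← h, Asum_base, ac_base]
      · obtain ⟨n', rfl⟩ : ∃ n', n = n' + 1 := ⟨n - 1, by omega⟩
        rcases r with _ | r
        · rw [Asum_succ0, (ih n' (by omega)).1 0 (by omega), (ih n' (by omega)).2 0 (by omega),
            add_comm, show ac (n' + 1) 0 = gc (n' + 1) 0 by simp [ac, gc_r0]]
          exact AR1 (by omega)
        · rw [Asum_succ, (ih n' (by omega)).1 (r + 1) (by omega),
            (ih n' (by omega)).1 r (by omega), (ih n' (by omega)).2 (r + 1) (by omega),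
            AR3 (by omega)]

lemma S_eq_sum (m r : ℕ) : S m r = ∑ t ∈ Ico 1 m, gc t r := by
  induction m with
  | zero => simp [S]
  | succ m ihm =>
    rcases Nat.eq_zero_or_pos m with rfl | hm
    · rw [S_succ, ihm, Bsum_empty (by omega)]
      simp
    · rw [S_succ, ihm, (BA m).1 r hm, Finset.sum_Ico_succ_top hm]

theorem card_Dplus (m r : ℕ) (h : 2 * r + 2 ≤ m) : (Dplus m r).ncard = S m r := by
  rw [card_Dplus_sum, S_eq_sum]
end
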